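/- Let X_1, …, X_n be {0,1}-valued random variables on a probability space such that the family {X_i} is 1-correlated, let μ = E[∑_{i=1}^n X_i], and let μ̄ ≥ μ be any upper bound on the mean. Then for every δ with 0 < δ ≤ 1, Pr[∑_{i=1}^n X_i ≥ (1 + δ)μ̄] ≤ exp(−δ²μ̄/3). -/

import Mathlib

open MeasureTheory

lemma log_lb {x : ℝ} (hx : 0 ≤ x) : 2*x/(2+x) ≤ Real.log (1+x) := by
  set g : ℝ → ℝ := fun y => Real.log (1+y) - 2*y/(2+y) with hg
  have key : ∀ y ∈ Set.Ici (0:ℝ), HasDerivAt g (1/(1+y) - 4/(2+y)^2) y := by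
    intro y hy
    have hy0 : (0:ℝ) ≤ y := hy
    have h1 : (1:ℝ) + y ≠ 0 := by linarith
    have h2 : (2:ℝ) + y ≠ 0 := by linarith
    have d1 : HasDerivAt (fun y : ℝ => Real.log (1+y)) (1/(1+y)) y := by
      have := (Real.hasDerivAt_log h1).comp y ((hasDerivAt_id y).const_add 1)
      simpa [one_div, Function.comp_def] using this
    have d2 : HasDerivAt (fun y : ℝ => 2*y/(2+y)) (4/(2+y)^2) y := by
      have := ((hasDerivAt_id y).const_mul 2).div ((hasDerivAt_id y).const_add 2) h2
      exact this.congr_deriv (by simp only [id]; ring)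
    exact d1.sub d2
  have mono : MonotoneOn g (Set.Ici 0) := by
    apply monotoneOn_of_deriv_nonneg (convex_Ici 0)
    · exact fun y hy => ((key y hy).continuousAt).continuousWithinAt
    · intro y hy
      rw [interior_Ici] at hy
      exact ((key y (Set.mem_Ioi.mp hy).le).differentiableAt).differentiableWithinAt
    · intro y hy
      rw [interior_Ici] at hy
      rw [(key y (Set.mem_Ioi.mp hy).le).deriv]
      have hy0 : (0:ℝ) < y := hy
      rw [sub_nonneg, div_le_div_iff₀ (by positivity) (by positivity)]
      nlinarith
  have h0 : g 0 = 0 := by simp [hg]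
  have := mono (Set.self_mem_Ici) hx hx
  rw [h0] at this
  simpa [hg, sub_nonneg] using this

theorem stmt5 {Ω : Type*} [MeasurableSpace Ω] (P : Measure Ω) [IsProbabilityMeasure P]
    {n : ℕ} (X : Fin n → Ω → ℝ) (hmeas : ∀ i, Measurable (X i))
    (h01 : ∀ i ω, X i ω = 0 ∨ X i ω = 1)
    (hcorr : ∀ S : Finset (Fin n),
      ∫ ω, ∏ i ∈ S, X i ω ∂P ≤ ∏ i ∈ S, ∫ ω, X i ω ∂P)
    (m mbar : ℝ) (hm : m = ∫ ω, ∑ i, X i ω ∂P) (hmbar : m ≤ mbar)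
    (δ : ℝ) (hδ0 : 0 < δ) (hδ1 : δ ≤ 1) :
    P {ω | (1 + δ) * mbar ≤ ∑ i, X i ω} ≤ ENNReal.ofReal (Real.exp (-(δ ^ 2 * mbar) / 3)) := by
  have hX0 : ∀ i ω, 0 ≤ X i ω := by
    intro i ω; rcases h01 i ω with h | h <;> rw [h] <;> norm_num
  have hX1 : ∀ i ω, X i ω ≤ 1 := by
    intro i ω; rcases h01 i ω with h | h <;> rw [h] <;> norm_num
  -- integrability of products
  have hint : ∀ s : Finset (Fin n), Integrable (fun ω => ∏ i ∈ s, X i ω) P := by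
    intro s
    refine Integrable.mono' (integrable_const (1:ℝ))
      ((Finset.measurable_prod s (fun i _ => hmeas i)).aestronglyMeasurable) ?_
    filter_upwards with ω
    rw [Real.norm_eq_abs, abs_of_nonneg (Finset.prod_nonneg fun i _ => hX0 i ω)]
    exact Finset.prod_le_one (fun i _ => hX0 i ω) (fun i _ => hX1 i ω)
  have hintX : ∀ i : Fin n, Integrable (X i) P := by
    intro i
    simpa using hint {i}
  set p : Fin n → ℝ := fun i => ∫ ω, X i ω ∂P with hp
  have hp0 : ∀ i, 0 ≤ p i := fun i => integral_nonneg (fun ω => hX0 i ω)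
  have hmsum : m = ∑ i, p i := by
    rw [hm, integral_finset_sum _ (fun i _ => hintX i)]
  have hm0 : 0 ≤ m := hmsum ▸ Finset.sum_nonneg (fun i _ => hp0 i)
  have hmbar0 : 0 ≤ mbar := le_trans hm0 hmbar
  -- the exponential moment function
  set f : Ω → ℝ := fun ω => ∏ i, (1 + δ * X i ω) with hf
  have hexpand : ∀ ω, f ω = ∑ s ∈ (Finset.univ : Finset (Fin n)).powerset,
      δ ^ s.card * ∏ i ∈ s, X i ω := by
    intro ω
    simp only [hf]
    have : ∀ i ∈ (Finset.univ : Finset (Fin n)), (1:ℝ) + δ * X i ω = δ * X i ω + 1 := by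
      intro i _; ring
    rw [Finset.prod_congr rfl this, Finset.prod_add]
    refine Finset.sum_congr rfl fun s _ => ?_
    simp [Finset.prod_mul_distrib]
  have hintf : Integrable f P := by
    have : Integrable (fun ω => ∑ s ∈ (Finset.univ : Finset (Fin n)).powerset,
        δ ^ s.card * ∏ i ∈ s, X i ω) P :=
      integrable_finset_sum _ (fun s _ => (hint s).const_mul _)
    exact this.congr (Filter.Eventually.of_forall fun ω => (hexpand ω).symm)
  -- bound the integral of f
  have hIf : ∫ ω, f ω ∂P ≤ Real.exp (δ * mbar) := by
    have h1 : ∫ ω, f ω ∂P = ∑ s ∈ (Finset.univ : Finset (Fin n)).powerset,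
        δ ^ s.card * ∫ ω, ∏ i ∈ s, X i ω ∂P := by
      rw [integral_congr_ae (Filter.Eventually.of_forall hexpand),
        integral_finset_sum _ (fun s _ => (hint s).const_mul _)]
      exact Finset.sum_congr rfl fun s _ => integral_const_mul _ _
    have h2 : ∑ s ∈ (Finset.univ : Finset (Fin n)).powerset,
        δ ^ s.card * ∫ ω, ∏ i ∈ s, X i ω ∂P ≤ ∏ i, (1 + δ * p i) := by
      have : ∏ i, ((1:ℝ) + δ * p i) = ∑ s ∈ (Finset.univ : Finset (Fin n)).powerset,
          δ ^ s.card * ∏ i ∈ s, p i := by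
        have : ∀ i ∈ (Finset.univ : Finset (Fin n)), (1:ℝ) + δ * p i = δ * p i + 1 := by
          intro i _; ring
        rw [Finset.prod_congr rfl this, Finset.prod_add]
        refine Finset.sum_congr rfl fun s _ => ?_
        simp [Finset.prod_mul_distrib]
      rw [this]
      refine Finset.sum_le_sum fun s _ => ?_
      exact mul_le_mul_of_nonneg_left (hcorr s) (pow_nonneg hδ0.le _)
    have h3 : ∏ i, ((1:ℝ) + δ * p i) ≤ Real.exp (δ * m) := by
      calc ∏ i, ((1:ℝ) + δ * p i) ≤ ∏ i, Real.exp (δ * p i) := by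
            refine Finset.prod_le_prod (fun i _ => by have := hp0 i; nlinarith) (fun i _ => ?_)
            have := Real.add_one_le_exp (δ * p i)
            linarith
        _ = Real.exp (∑ i, δ * p i) := (Real.exp_sum _ _).symm
        _ = Real.exp (δ * m) := by rw [hmsum, Finset.mul_sum]
    calc ∫ ω, f ω ∂P ≤ ∏ i, (1 + δ * p i) := h1 ▸ h2
      _ ≤ Real.exp (δ * m) := h3
      _ ≤ Real.exp (δ * mbar) := Real.exp_le_exp.mpr (by nlinarith)
  -- pointwise: f ω = exp((∑ X i ω) * log(1+δ))
  have hδ1' : (0:ℝ) < 1 + δ := by linarith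
  have hlogpos : 0 ≤ Real.log (1 + δ) := Real.log_nonneg (by linarith)
  have hfexp : ∀ ω, f ω = Real.exp ((∑ i, X i ω) * Real.log (1 + δ)) := by
    intro ω
    simp only [hf]
    rw [Finset.sum_mul, Real.exp_sum]
    refine Finset.prod_congr rfl fun i _ => ?_
    rcases h01 i ω with h | h <;> rw [h]
    · simp
    · rw [one_mul, mul_one, Real.exp_log hδ1']
  set a : ℝ := Real.exp ((1 + δ) * mbar * Real.log (1 + δ)) with ha
  have ha0 : 0 < a := Real.exp_pos _
  have hsub : {ω | (1 + δ) * mbar ≤ ∑ i, X i ω} ⊆ {ω | a ≤ f ω} := by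
    intro ω hω
    simp only [Set.mem_setOf_eq] at hω ⊢
    rw [hfexp ω, ha]
    exact Real.exp_le_exp.mpr (mul_le_mul_of_nonneg_right hω hlogpos)
  have hmarkov := mul_meas_ge_le_integral_of_nonneg
    (Filter.Eventually.of_forall fun ω => Finset.prod_nonneg fun i _ => by have := hX0 i ω; nlinarith : 0 ≤ᵐ[P] f)
    hintf a
  have hmono : P {ω | (1 + δ) * mbar ≤ ∑ i, X i ω} ≤ P {ω | a ≤ f ω} := measure_mono hsub
  -- final bound
  have hfin : (P {ω | (1 + δ) * mbar ≤ ∑ i, X i ω}).toReal ≤ Real.exp (-(δ ^ 2 * mbar) / 3) := by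
    have ht1 : (P {ω | (1 + δ) * mbar ≤ ∑ i, X i ω}).toReal ≤ (P {ω | a ≤ f ω}).toReal :=
      ENNReal.toReal_mono (measure_ne_top _ _) hmono
    have ht2 : (P {ω | a ≤ f ω}).toReal ≤ Real.exp (δ * mbar) / a := by
      rw [le_div_iff₀ ha0, mul_comm]
      exact le_trans hmarkov hIf
    have ht3 : Real.exp (δ * mbar) / a = Real.exp (δ * mbar - (1 + δ) * mbar * Real.log (1 + δ)) := by
      rw [ha, Real.exp_sub]
    have ht4 : δ * mbar - (1 + δ) * mbar * Real.log (1 + δ) ≤ -(δ ^ 2 * mbar) / 3 := by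
      have hlb := log_lb hδ0.le
      have h2δ : (0:ℝ) < 2 + δ := by linarith
      have key : δ + δ ^ 2 / 3 ≤ (1 + δ) * Real.log (1 + δ) := by
        have : δ + δ ^ 2 / 3 ≤ (1 + δ) * (2 * δ / (2 + δ)) := by
          rw [mul_div_assoc', le_div_iff₀ h2δ]
          nlinarith
        nlinarith [mul_le_mul_of_nonneg_left hlb (by linarith : (0:ℝ) ≤ 1 + δ)]
      nlinarith [mul_le_mul_of_nonneg_left key hmbar0]
    calc (P {ω | (1 + δ) * mbar ≤ ∑ i, X i ω}).toReal
        ≤ Real.exp (δ * mbar) / a := le_trans ht1 ht2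
      _ = Real.exp (δ * mbar - (1 + δ) * mbar * Real.log (1 + δ)) := ht3
      _ ≤ Real.exp (-(δ ^ 2 * mbar) / 3) := Real.exp_le_exp.mpr ht4
  rw [ENNReal.le_ofReal_iff_toReal_le (measure_ne_top _ _) (Real.exp_pos _).le]
  exact hfin
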